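/- Let θ be inner and g ∈ L^∞(T), assume ker D_g^θ is finite-dimensional, and set A := {f ∈ ker D_g^θ : gf ∈ K_θ ∩ zH²} and C := ker D_g^θ ∩ (H̄²₀ ⊕ θzH²) ∩ A. If ker D_g^θ ≠ {0}, then 1 ≤ dim(ker D_g^θ ⊖ C) ≤ 2. -/

import Mathlib

open MeasureTheory Complex Real
open scoped ENNReal ComplexConjugate

noncomputable section

namespace Paper

instance : Fact (0 < 2 * Real.pi) := ⟨by positivity⟩

abbrev Tc : Type := AddCircle (2 * Real.pi)
abbrev μ0 : MeasureTheory.Measure Tc := AddCircle.haarAddCircle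
abbrev L2 : Type := MeasureTheory.Lp ℂ 2 μ0

def coeffCLM (n : ℤ) : L2 →L[ℂ] ℂ :=
  LinearMap.mkContinuous
    { toFun := fun f => fourierBasis.repr f n
      map_add' := fun f g => by simp
      map_smul' := fun c f => by simp }
    1
    (fun f => by
      have h := lp.norm_apply_le_norm (p := 2) (by norm_num) (fourierBasis.repr f) n
      simpa using h)

def cf (f : L2) (n : ℤ) : ℂ := coeffCLM n f

/-- The subspace of `L²(𝕋)` of functions whose Fourier coefficients of index `< k` vanish.
Thus `coeffGE 0 = H²` and `coeffGE k = zᵏH²` for `k ≥ 0`. -/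
def coeffGE (k : ℤ) : Submodule ℂ L2 :=
  ⨅ (n : ℤ) (_ : n < k), LinearMap.ker (coeffCLM n : L2 →ₗ[ℂ] ℂ)

/-- The subspace of `L²(𝕋)` of functions whose Fourier coefficients of index `≥ k` vanish.
Thus `coeffLT 0 = conj (H²₀) = (H²)^⊥`. -/
def coeffLT (k : ℤ) : Submodule ℂ L2 :=
  ⨅ (n : ℤ) (_ : k ≤ n), LinearMap.ker (coeffCLM n : L2 →ₗ[ℂ] ℂ)

/-- The Hardy space `H²` of the unit disc, viewed as a subspace of `L²(𝕋)`. -/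
def H2 : Submodule ℂ L2 := coeffGE 0

lemma mem_coeffGE {k : ℤ} {f : L2} : f ∈ coeffGE k ↔ ∀ n < k, cf f n = 0 := by
  simp [coeffGE, cf, Submodule.mem_iInf, LinearMap.mem_ker]

lemma isClosed_coeffGE (k : ℤ) : IsClosed ((coeffGE k : Submodule ℂ L2) : Set L2) := by
  have h : ((coeffGE k : Submodule ℂ L2) : Set L2)
      = ⋂ (n : ℤ) (_ : n < k), (LinearMap.ker (coeffCLM n : L2 →ₗ[ℂ] ℂ) : Set L2) := by
    ext f
    simp [coeffGE, Submodule.mem_iInf, Set.mem_iInter]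
  rw [h]
  exact isClosed_iInter fun n => isClosed_iInter fun _ => ContinuousLinearMap.isClosed_ker (coeffCLM n)

end Paper
namespace Paper

open scoped Classical in
/-- Multiplication by an `L^∞` function, as a linear map on `L²(𝕋)` (defined to be `0` if the
symbol is not essentially bounded). -/
def mulLM (g : Tc → ℂ) : L2 →ₗ[ℂ] L2 :=
  if hg : MemLp g ⊤ μ0 then
    { toFun := fun f => ((Lp.memLp f).smul (r := 2) hg).toLp (g • ⇑f)
      map_add' := fun f₁ f₂ => by
        apply Lp.ext
        filter_upwards [MemLp.coeFn_toLp ((Lp.memLp (f₁ + f₂)).smul (r := 2) hg),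
          MemLp.coeFn_toLp ((Lp.memLp f₁).smul (r := 2) hg),
          MemLp.coeFn_toLp ((Lp.memLp f₂).smul (r := 2) hg),
          Lp.coeFn_add f₁ f₂,
          Lp.coeFn_add (((Lp.memLp f₁).smul (r := 2) hg).toLp (g • ⇑f₁))
            (((Lp.memLp f₂).smul (r := 2) hg).toLp (g • ⇑f₂))] with x h0 h1 h2 h3 h4
        rw [h0, h4, Pi.add_apply, h1, h2]
        simp only [Pi.smul_apply', Pi.add_apply, h3, smul_add]
      map_smul' := fun c f => by
        apply Lp.ext
        filter_upwards [MemLp.coeFn_toLp ((Lp.memLp (c • f)).smul (r := 2) hg),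
          MemLp.coeFn_toLp ((Lp.memLp f).smul (r := 2) hg),
          Lp.coeFn_smul c f,
          Lp.coeFn_smul c (((Lp.memLp f).smul (r := 2) hg).toLp (g • ⇑f))] with x h0 h1 h3 h4
        simp only [RingHom.id_apply]
        rw [h0, h4, Pi.smul_apply, h1]
        simp only [Pi.smul_apply', Pi.smul_apply, h3]
        exact smul_comm _ _ _ }
  else 0

end Paper
namespace Paper

/-- The orthogonal projection of `L²(𝕋)` onto a closed subspace, as a map `L² → L²`. -/
def projCLM (U : Submodule ℂ L2) (hU : IsClosed (U : Set L2)) : L2 →L[ℂ] L2 :=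
  letI : CompleteSpace U := hU.completeSpace_coe
  U.subtypeL.comp (U.orthogonalProjectionOnto)

/-- The subspace `θH²` of `L²(𝕋)`. -/
def thetaH2 (θ : Tc → ℂ) : Submodule ℂ L2 := H2.map (mulLM θ)

/-- The model space `K_θ = H² ⊖ θH²`. -/
def Kmod (θ : Tc → ℂ) : Submodule ℂ L2 := H2 ⊓ (thetaH2 θ)ᗮ

lemma isClosed_Kmod (θ : Tc → ℂ) : IsClosed ((Kmod θ : Submodule ℂ L2) : Set L2) :=
  (isClosed_coeffGE 0).inter (thetaH2 θ).isClosed_orthogonal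

/-- The orthogonal projection `P_θ : L² → K_θ` (composed with the inclusion back into `L²`). -/
def Ptheta (θ : Tc → ℂ) : L2 →L[ℂ] L2 := projCLM (Kmod θ) (isClosed_Kmod θ)

/-- The orthogonal projection `P₊ : L² → H²`. -/
def Pplus : L2 →L[ℂ] L2 := projCLM H2 (isClosed_coeffGE 0)

/-- The independent variable `z = e^{it}`, as a function on the circle. -/
def zf : Tc → ℂ := fun x => fourier 1 x

/-- The conjugate variable `z̄ = e^{-it}`. -/
def zbar : Tc → ℂ := fun x => fourier (-1) x

lemma memLp_fourier (n : ℤ) : MemLp (fun x : Tc => (fourier n x : ℂ)) ⊤ μ0 := by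
  refine memLp_top_of_bound ((fourier n).continuous.aestronglyMeasurable) 1 ?_
  exact Filter.Eventually.of_forall fun x => le_of_eq (Circle.norm_coe _)

lemma memLp_zf : MemLp zf ⊤ μ0 := memLp_fourier 1

lemma memLp_zbar : MemLp zbar ⊤ μ0 := memLp_fourier (-1)

/-- The backward shift `S* : f ↦ (f - f(0))/z`, realised on `L²(𝕋)` as
`f ↦ P₊(z̄ f)`; on `H²` this is the usual backward shift. -/
def Sstar : L2 →ₗ[ℂ] L2 := (Pplus : L2 →ₗ[ℂ] L2).comp (mulLM zbar)

/-- `θ` is an inner function: it is essentially bounded, unimodular a.e. on the circle, and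
all its negative Fourier coefficients vanish (i.e. it is the boundary function of a bounded
analytic function on the disc). -/
structure IsInner (θ : Tc → ℂ) : Prop where
  memLinf : MemLp θ ⊤ μ0
  unimodular : ∀ᵐ x ∂μ0, ‖θ x‖ = 1
  analytic : ∀ n : ℤ, n < 0 → fourierCoeff θ n = 0

/-- Pointwise complex conjugation of a function on the circle. -/
def conjFun (f : Tc → ℂ) : Tc → ℂ := fun x => (starRingEnd ℂ) (f x)

lemma memLp_conj {f : Tc → ℂ} {p : ℝ≥0∞} (hf : MemLp f p μ0) : MemLp (conjFun f) p μ0 := by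
  refine ⟨continuous_star.comp_aestronglyMeasurable hf.1, ?_⟩
  have h : eLpNorm (conjFun f) p μ0 = eLpNorm f p μ0 :=
    eLpNorm_congr_norm_ae (Filter.Eventually.of_forall fun x => by
      simp [conjFun])
  rw [h]
  exact hf.2

/-- Complex conjugation on `L²(𝕋)`. -/
def conjL2 (f : L2) : L2 := (memLp_conj (Lp.memLp f)).toLp (conjFun ⇑f)

end Paper
namespace Paper

/-- The set `w·U = {h ∈ L² : h = w·k (a.e.) for some k ∈ U}`, for a fixed function `w` on the
circle and a subspace `U ⊆ L²`; this is a (not necessarily closed) subspace of `L²`. -/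
def mulSet (w : Tc → ℂ) (U : Submodule ℂ L2) : Submodule ℂ L2 where
  carrier := {h : L2 | ∃ k ∈ U, (⇑h : Tc → ℂ) =ᵐ[μ0] fun x => w x * (⇑k : Tc → ℂ) x}
  add_mem' := by
    rintro a b ⟨k₁, hk₁, ha⟩ ⟨k₂, hk₂, hb⟩
    refine ⟨k₁ + k₂, U.add_mem hk₁ hk₂, ?_⟩
    filter_upwards [ha, hb, Lp.coeFn_add a b, Lp.coeFn_add k₁ k₂] with x h1 h2 h3 h4
    simp only [h3, Pi.add_apply, h1, h2, h4, mul_add]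
  zero_mem' := by
    refine ⟨0, U.zero_mem, ?_⟩
    filter_upwards [Lp.coeFn_zero ℂ 2 μ0] with x h1
    simp [h1]
  smul_mem' := by
    rintro c a ⟨k, hk, ha⟩
    refine ⟨c • k, U.smul_mem c hk, ?_⟩
    filter_upwards [ha, Lp.coeFn_smul c a, Lp.coeFn_smul c k] with x h1 h2 h3
    simp only [h2, Pi.smul_apply, h1, h3, smul_eq_mul]
    ring

/-- `f` is an outer function: `f ∈ H²` and the polynomial multiples of `f` are dense in `H²`
(i.e. `f` is cyclic for the forward shift). -/
def IsOuter (f : L2) : Prop :=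
  f ∈ H2 ∧
    (Submodule.span ℂ (Set.range fun k : ℕ => ((mulLM zf) ^ k) f)).topologicalClosure = H2

/-- `h` is a cyclic vector for the backward shift `S*` on `H²`. -/
def CyclicSstar (h : L2) : Prop :=
  (Submodule.span ℂ (Set.range fun k : ℕ => (Sstar ^ k) h)).topologicalClosure = H2

/-- `d` divides `u` in the sense of inner functions. -/
def InnerDvd (d u : Tc → ℂ) : Prop :=
  ∃ v : Tc → ℂ, IsInner v ∧ ∀ᵐ x ∂μ0, u x = d x * v x

/-- Two inner functions have greatest common inner divisor `1`, i.e. every common inner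
divisor is a (necessarily unimodular) constant. -/
def CoprimeInner (u₁ u₂ : Tc → ℂ) : Prop :=
  ∀ d : Tc → ℂ, IsInner d → InnerDvd d u₁ → InnerDvd d u₂ → ∃ c : ℂ, ∀ᵐ x ∂μ0, d x = c

/-- The kernel of the truncated Toeplitz operator `A_g^θ = P_θ (g ·) : K_θ → K_θ`:
`f ∈ ker A_g^θ` iff `f ∈ K_θ` and `g f ⊥ K_θ`. -/
def kerA (θ g : Tc → ℂ) : Submodule ℂ L2 :=
  Kmod θ ⊓ ((Kmod θ)ᗮ).comap (mulLM g)

/-- The kernel of the dual truncated Toeplitz operator `D_g^θ = Q (g ·) : K_θ^⊥ → K_θ^⊥`: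
`f ∈ ker D_g^θ` iff `f ∈ K_θ^⊥` and `g f ⊥ K_θ^⊥`. -/
def kerD (θ g : Tc → ℂ) : Submodule ℂ L2 :=
  (Kmod θ)ᗮ ⊓ (((Kmod θ)ᗮ)ᗮ).comap (mulLM g)

/-- The space `A = {f ∈ ker D_g^θ : gf ∈ K_θ ∩ zH²}`. -/
def dualA (θ g : Tc → ℂ) : Submodule ℂ L2 :=
  kerD θ g ⊓ (Kmod θ ⊓ coeffGE 1).comap (mulLM g)

/-- The space `C = ker D_g^θ ∩ (conj H²₀ ⊕ θzH²) ∩ A`. -/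
def dualC (θ g : Tc → ℂ) : Submodule ℂ L2 :=
  kerD θ g ⊓ (coeffLT 0 ⊔ (coeffGE 1).map (mulLM θ)) ⊓ dualA θ g

end Paper
namespace Paper

/-- The vector-valued space `L²(𝕋, ℂⁿ)`, realised as an `ℓ²`-direct sum of `n` copies of
`L²(𝕋)`; the subspace `H2v n` below is the vector-valued Hardy space `H²(𝔻, ℂⁿ)`. -/
abbrev Vec (n : ℕ) : Type := PiLp 2 (fun _ : Fin n => L2)

/-- The `i`-th component, as a linear map `L²(𝕋, ℂⁿ) → L²(𝕋)`. -/
def compLM {n : ℕ} (i : Fin n) : Vec n →ₗ[ℂ] L2 where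
  toFun F := F i
  map_add' F G := rfl
  map_smul' c F := rfl

/-- Vector-valued analogue of `coeffGE`: `coeffGEv n 0 = H²(𝔻, ℂⁿ)` and
`coeffGEv n 1 = zH²(𝔻, ℂⁿ)`. -/
def coeffGEv (n : ℕ) (k : ℤ) : Submodule ℂ (Vec n) :=
  ⨅ i : Fin n, (coeffGE k).comap (compLM i)

/-- The vector-valued Hardy space `H²(𝔻, ℂⁿ)`. -/
def H2v (n : ℕ) : Submodule ℂ (Vec n) := coeffGEv n 0

/-- The vector-valued model space `K_θ(𝔻, ℂⁿ)` (all components in `K_θ`). -/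
def Kv (θ : Tc → ℂ) (n : ℕ) : Submodule ℂ (Vec n) :=
  ⨅ i : Fin n, (Kmod θ).comap (compLM i)

/-- Evaluation at the origin, `F ↦ F(0)`, for (Hardy-space) elements of `L²(𝕋, ℂⁿ)`. -/
def ev0 {n : ℕ} (F : Vec n) : EuclideanSpace ℂ (Fin n) := WithLp.toLp 2 (fun i => cf (F i) 0)

/-- Evaluation at the origin as a linear map `H²(𝔻, ℂⁿ) → ℂⁿ`. -/
def ev0LM (n : ℕ) : Vec n →ₗ[ℂ] EuclideanSpace ℂ (Fin n) where
  toFun := ev0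
  map_add' _F _G := by
    ext i
    simp [ev0, cf]
  map_smul' _c _F := by
    ext i
    simp [ev0, cf]

/-- The componentwise backward shift on `L²(𝕋, ℂⁿ)`. -/
def SstarV {n : ℕ} : Vec n →ₗ[ℂ] Vec n where
  toFun F := WithLp.toLp 2 (fun i => Sstar (F i))
  map_add' _F _G := by
    ext i
    simp
  map_smul' _c _F := by
    ext i
    simp

/-- Componentwise multiplication by a scalar `L^∞` function on `L²(𝕋, ℂⁿ)`. -/
def mulVLM (g : Tc → ℂ) {n : ℕ} : Vec n →ₗ[ℂ] Vec n where
  toFun F := WithLp.toLp 2 (fun i => mulLM g (F i))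
  map_add' _F _G := by
    ext i
    simp
  map_smul' _c _F := by
    ext i
    simp

/-- The projection onto the first `i` coordinates, `P_i : H²(𝔻, ℂⁿ) → H²(𝔻, ℂⁱ)`. -/
def projLE {n i : ℕ} (h : i ≤ n) : Vec n →ₗ[ℂ] Vec i where
  toFun F := WithLp.toLp 2 (fun j => F (Fin.castLE h j))
  map_add' F G := rfl
  map_smul' c F := rfl

/-- The `i`-th row of a matrix symbol applied to a vector function:
`F ↦ ∑ j, G i j • F j`. -/
def rowLM {n : ℕ} (G : Matrix (Fin n) (Fin n) (Tc → ℂ)) (i : Fin n) : Vec n →ₗ[ℂ] L2 :=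
  ∑ j : Fin n, (mulLM (G i j)).comp (compLM j)

/-- The kernel of the block Toeplitz operator `T_G = P₊(G ·)` on `H²(𝔻, ℂⁿ)`:
`F ∈ ker T_G` iff `F ∈ H²(𝔻, ℂⁿ)` and every component of `GF` is orthogonal to `H²`. -/
def kerT {n : ℕ} (G : Matrix (Fin n) (Fin n) (Tc → ℂ)) : Submodule ℂ (Vec n) :=
  H2v n ⊓ ⨅ i : Fin n, (H2ᗮ).comap (rowLM G i)

/-- The kernel of the matrix truncated Toeplitz operator `A_G^θ = P_θ(G ·)` on `K_θ(𝔻, ℂ²)`. -/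
def kerAv (θ : Tc → ℂ) (G : Matrix (Fin 2) (Fin 2) (Tc → ℂ)) : Submodule ℂ (Vec 2) :=
  Kv θ 2 ⊓ ⨅ i : Fin 2, ((Kmod θ)ᗮ).comap (rowLM G i)

/-- The scalar-type space `w·U ⊆ L²(𝕋, ℂⁿ)`, for a fixed vector function `w` and a
subspace `U ⊆ L²(𝕋)` of scalar functions. -/
def vecMulSet {n : ℕ} (w : Vec n) (U : Submodule ℂ L2) : Submodule ℂ (Vec n) where
  carrier := {F | ∃ k ∈ U, ∀ i : Fin n,
    (⇑(F i) : Tc → ℂ) =ᵐ[μ0] fun x => (⇑(w i) : Tc → ℂ) x * (⇑k : Tc → ℂ) x}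
  add_mem' := by
    rintro a b ⟨k₁, hk₁, ha⟩ ⟨k₂, hk₂, hb⟩
    refine ⟨k₁ + k₂, U.add_mem hk₁ hk₂, fun i => ?_⟩
    have hab : (a + b) i = a i + b i := rfl
    rw [hab]
    filter_upwards [ha i, hb i, Lp.coeFn_add (a i) (b i), Lp.coeFn_add k₁ k₂]
      with x h1 h2 h3 h4
    simp only [h3, Pi.add_apply, h1, h2, h4, mul_add]
  zero_mem' := by
    refine ⟨0, U.zero_mem, fun i => ?_⟩
    have h0 : (0 : Vec n) i = 0 := rfl
    rw [h0]
    filter_upwards [Lp.coeFn_zero ℂ 2 μ0] with x h1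
    simp [h1]
  smul_mem' := by
    rintro c a ⟨k, hk, ha⟩
    refine ⟨c • k, U.smul_mem c hk, fun i => ?_⟩
    have hc : (c • a) i = c • (a i) := rfl
    rw [hc]
    filter_upwards [ha i, Lp.coeFn_smul c (a i), Lp.coeFn_smul c k] with x h1 h2 h3
    simp only [h2, Pi.smul_apply, h1, h3, smul_eq_mul]
    ring

end Paper
namespace Paper

/-- The representation `F = F₀ k₀ + z ∑ⱼ kⱼ eⱼ` of Theorem 3.4(1): here the columns of `F₀`
are `W 0, …, W (r-1)`, the `eⱼ` are an orthonormal basis of the defect space, and the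
parameter `k = (k₀, k₁, …, k_m)` runs through a subspace of `H²(𝔻, ℂ^{r+m})`. -/
def rep1 {n r m : ℕ} (W : Fin r → Vec n) (e : Fin m → Vec n) (k : Vec (r + m)) (F : Vec n) :
    Prop :=
  ∀ i : Fin n,
    (⇑(F i) : Tc → ℂ) =ᵐ[μ0] fun x =>
      (∑ j : Fin r, (⇑(k (Fin.castAdd m j)) : Tc → ℂ) x * (⇑(W j i) : Tc → ℂ) x) +
        zf x * ∑ j : Fin m, (⇑(k (Fin.natAdd r j)) : Tc → ℂ) x * (⇑(e j i) : Tc → ℂ) x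

/-- The representation `F = z ∑ⱼ kⱼ eⱼ` of Theorem 3.4(2). -/
def rep2 {n m : ℕ} (e : Fin m → Vec n) (k : Vec m) (F : Vec n) : Prop :=
  ∀ i : Fin n,
    (⇑(F i) : Tc → ℂ) =ᵐ[μ0] fun x =>
      zf x * ∑ j : Fin m, (⇑(k j) : Tc → ℂ) x * (⇑(e j i) : Tc → ℂ) x

end Paper
namespace Paper
open scoped InnerProductSpace

lemma cf_eq_fourierCoeff (f : L2) (n : ℤ) : cf f n = fourierCoeff (⇑f) n := by
  rw [cf, coeffCLM]
  simp only [LinearMap.mkContinuous_apply, LinearMap.coe_mk, AddHom.coe_mk]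
  exact fourierBasis_repr f n

lemma mem_coeffLT {k : ℤ} {f : L2} : f ∈ coeffLT k ↔ ∀ n, k ≤ n → cf f n = 0 := by
  simp [coeffLT, cf, Submodule.mem_iInf, LinearMap.mem_ker]

lemma mulLM_coeFn {g : Tc → ℂ} (hg : MemLp g ⊤ μ0) (f : L2) :
    ⇑(mulLM g f) =ᵐ[μ0] fun x => g x * (⇑f : Tc → ℂ) x := by
  rw [mulLM, dif_pos hg]
  filter_upwards [MemLp.coeFn_toLp ((Lp.memLp f).smul (r := 2) hg)] with x h
  simpa [Pi.smul_apply', smul_eq_mul] using h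

lemma fourierCoeff_congr {f h : Tc → ℂ} (hfh : f =ᵐ[μ0] h) (n : ℤ) :
    fourierCoeff f n = fourierCoeff h n := by
  unfold fourierCoeff
  exact integral_congr_ae (by filter_upwards [hfh] with x hx; rw [hx])

lemma parseval (f h : L2) : ⟪f, h⟫_ℂ = ∑' n : ℤ, conj (cf f n) * cf h n := by
  have := fourierBasis.repr.inner_map_map f h
  rw [← this, lp.inner_eq_tsum]
  refine tsum_congr fun n => ?_
  rw [RCLike.inner_apply, mul_comm]
  rfl

lemma inner_eq_zero_of_cf (f h : L2) (hc : ∀ n : ℤ, conj (cf f n) * cf h n = 0) :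
    ⟪f, h⟫_ℂ = 0 := by
  rw [parseval]
  simp [hc]

lemma inner_L2 (f h : L2) : ⟪f, h⟫_ℂ = ∫ x, conj (f x) * h x ∂μ0 := by
  rw [MeasureTheory.L2.inner_def]
  simp [RCLike.inner_apply]
  refine integral_congr_ae (Filter.Eventually.of_forall fun x => ?_)
  exact mul_comm _ _

lemma cf_mulLM_zbar {f : L2} (n : ℤ) : cf (mulLM zbar f) n = cf f (n + 1) := by
  rw [cf_eq_fourierCoeff, cf_eq_fourierCoeff,
    fourierCoeff_congr (mulLM_coeFn memLp_zbar f)]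
  unfold fourierCoeff
  refine integral_congr_ae (Filter.Eventually.of_forall fun x => ?_)
  simp only [zbar, smul_eq_mul]
  rw [show -(n+1) = -n + -1 by ring, fourier_add]
  ring

lemma cf_mulLM_zf {f : L2} (n : ℤ) : cf (mulLM zf f) n = cf f (n - 1) := by
  rw [cf_eq_fourierCoeff, cf_eq_fourierCoeff,
    fourierCoeff_congr (mulLM_coeFn memLp_zf f)]
  unfold fourierCoeff
  refine integral_congr_ae (Filter.Eventually.of_forall fun x => ?_)
  simp only [zf, smul_eq_mul]
  rw [show -(n-1) = -n + 1 by ring, fourier_add]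
  ring

lemma mulLM_adjoint {a : Tc → ℂ} (ha : MemLp a ⊤ μ0) (u v : L2) :
    ⟪u, mulLM a v⟫_ℂ = ⟪mulLM (conjFun a) u, v⟫_ℂ := by
  rw [inner_L2, inner_L2]
  refine integral_congr_ae ?_
  filter_upwards [mulLM_coeFn ha v, mulLM_coeFn (memLp_conj ha) u] with x h1 h2
  rw [h1, h2]
  simp [conjFun]
  ring

lemma mulLM_comm {a b : Tc → ℂ} (ha : MemLp a ⊤ μ0) (hb : MemLp b ⊤ μ0) (f : L2) :
    mulLM a (mulLM b f) = mulLM b (mulLM a f) := by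
  apply Lp.ext (p := (2:ℝ≥0∞))
  filter_upwards [mulLM_coeFn ha (mulLM b f), mulLM_coeFn hb f,
    mulLM_coeFn hb (mulLM a f), mulLM_coeFn ha f] with x h1 h2 h3 h4
  rw [h1, h2, h3, h4]; ring

lemma mulLM_cancel {a b : Tc → ℂ} (ha : MemLp a ⊤ μ0) (hb : MemLp b ⊤ μ0)
    (hab : ∀ᵐ x ∂μ0, a x * b x = 1) (f : L2) :
    mulLM a (mulLM b f) = f := by
  apply Lp.ext (p := (2:ℝ≥0∞))
  filter_upwards [mulLM_coeFn ha (mulLM b f), mulLM_coeFn hb f, hab] with x h1 h2 h3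
  rw [h1, h2, ← mul_assoc, h3, one_mul]

lemma conjFun_zbar : conjFun zbar = zf := by
  funext x
  simp only [conjFun, zbar, zf]
  rw [fourier_neg, Complex.conj_conj]

lemma zf_mul_zbar (x : Tc) : zf x * zbar x = 1 := by
  rw [zf, zbar, ← fourier_add]
  norm_num [fourier_zero]

lemma cf_eq_inner (f : L2) (n : ℤ) : cf f n = ⟪(fourierLp 2 n : L2), f⟫_ℂ := by
  rw [cf, coeffCLM]
  simp only [LinearMap.mkContinuous_apply, LinearMap.coe_mk, AddHom.coe_mk]
  rw [fourierBasis.repr_apply_apply, coe_fourierBasis]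

lemma cf_conjmul_fourier {θ : Tc → ℂ} (hθ : MemLp θ ⊤ μ0) (n m : ℤ) :
    cf (mulLM (conjFun θ) (fourierLp 2 n : L2)) m = conj (fourierCoeff θ (n - m)) := by
  rw [cf_eq_fourierCoeff, fourierCoeff_congr (mulLM_coeFn (memLp_conj hθ) _)]
  have h2 : (fun x : Tc => conjFun θ x * (fourierLp 2 n : L2) x)
      =ᵐ[μ0] fun x => conjFun θ x * fourier n x := by
    filter_upwards [coeFn_fourierLp 2 n] with x hx
    rw [hx]
  rw [fourierCoeff_congr h2]
  unfold fourierCoeff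
  rw [← integral_conj]
  refine integral_congr_ae (Filter.Eventually.of_forall fun x => ?_)
  simp only [conjFun, smul_eq_mul, map_mul]
  have h4 : conj ((fourier (-(n-m))) x) = (fourier (n-m)) x := by
    rw [fourier_neg, Complex.conj_conj]
  rw [h4, show n - m = -m + n from by ring, fourier_add]
  ring

/-- Multiplication by a bounded analytic function preserves `zᵃH²`. -/
lemma mulLM_mem_coeffGE {θ : Tc → ℂ} (hθ : IsInner θ) {a : ℤ} {k : L2}
    (hk : k ∈ coeffGE a) : mulLM θ k ∈ coeffGE a := by
  rw [mem_coeffGE] at hk ⊢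
  intro n hn
  rw [cf_eq_inner, mulLM_adjoint hθ.memLinf, parseval]
  have hz : ∀ m : ℤ, conj (cf (mulLM (conjFun θ) (fourierLp 2 n : L2)) m) * cf k m = 0 := by
    intro m
    rw [cf_conjmul_fourier hθ.memLinf, Complex.conj_conj]
    rcases lt_or_ge m a with hm | hm
    · rw [hk m hm, mul_zero]
    · rw [hθ.analytic (n - m) (by omega), zero_mul]
  simp [hz]

lemma norm_mulLM_unimod {θ : Tc → ℂ} (hθL : MemLp θ ⊤ μ0) (hu : ∀ᵐ x ∂μ0, ‖θ x‖ = 1) (f : L2) :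
    ‖mulLM θ f‖ = ‖f‖ := by
  rw [Lp.norm_def, Lp.norm_def]
  congr 1
  refine eLpNorm_congr_norm_ae ?_
  filter_upwards [mulLM_coeFn hθL f, hu] with x h1 h2
  rw [h1]
  simp [norm_mul, h2]

/-- Multiplication by a unimodular function as a linear isometry. -/
def mulLI {θ : Tc → ℂ} (hθL : MemLp θ ⊤ μ0) (hu : ∀ᵐ x ∂μ0, ‖θ x‖ = 1) : L2 →ₗᵢ[ℂ] L2 :=
  ⟨mulLM θ, norm_mulLM_unimod hθL hu⟩

lemma isClosed_thetaH2 {θ : Tc → ℂ} (hθ : IsInner θ) :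
    IsClosed ((thetaH2 θ : Submodule ℂ L2) : Set L2) := by
  have h1 : ((thetaH2 θ : Submodule ℂ L2) : Set L2)
      = (mulLI hθ.memLinf hθ.unimodular) '' ((H2 : Submodule ℂ L2) : Set L2) := rfl
  rw [h1]
  refine IsComplete.isClosed ?_
  rw [LinearIsometry.isComplete_image_iff]
  exact (isClosed_coeffGE 0).isComplete

section Theta
variable {θ : Tc → ℂ}

lemma cf_fourierLp (m n : ℤ) : cf (fourierLp 2 m : L2) n = if m = n then 1 else 0 := by
  classical
  rw [cf, coeffCLM]
  simp only [LinearMap.mkContinuous_apply, LinearMap.coe_mk, AddHom.coe_mk]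
  rw [← coe_fourierBasis, fourierBasis.repr_self]
  rw [lp.single_apply]
  split_ifs with h1 h2 h3 <;> simp_all

lemma fourierLp_mem_coeffGE {m : ℤ} (hm : 0 ≤ m) : (fourierLp 2 m : L2) ∈ coeffGE 0 := by
  rw [mem_coeffGE]
  intro n hn
  rw [cf_fourierLp, if_neg (by omega)]

lemma inner_GE_LT {a : ℤ} {u v : L2} (hu : u ∈ coeffGE a) (hv : v ∈ coeffLT a) :
    ⟪u, v⟫_ℂ = 0 := by
  refine inner_eq_zero_of_cf u v fun n => ?_
  rcases lt_or_ge n a with hn | hn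
  · rw [mem_coeffGE] at hu
    rw [hu n hn, map_zero, zero_mul]
  · rw [mem_coeffLT] at hv
    rw [hv n hn, mul_zero]

lemma inner_LT_GE {a : ℤ} {u v : L2} (hu : u ∈ coeffLT a) (hv : v ∈ coeffGE a) :
    ⟪u, v⟫_ℂ = 0 := by
  rw [inner_eq_zero_symm]
  exact inner_GE_LT hv hu

def theta2 (hθ : IsInner θ) : L2 := (hθ.memLinf.mono_exponent le_top).toLp θ

lemma cf_theta2 (hθ : IsInner θ) (n : ℤ) : cf (theta2 hθ) n = fourierCoeff θ n := by
  rw [cf_eq_fourierCoeff]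
  exact fourierCoeff_congr (MemLp.coeFn_toLp _) n

lemma theta2_mem_H2 (hθ : IsInner θ) : theta2 hθ ∈ H2 := by
  rw [H2, mem_coeffGE]
  intro n hn
  rw [cf_theta2]
  exact hθ.analytic n hn

lemma thetaH2_le_H2 (hθ : IsInner θ) : thetaH2 θ ≤ H2 := by
  rintro w hw
  obtain ⟨v, hv, rfl⟩ := Submodule.mem_map.mp hw
  exact mulLM_mem_coeffGE hθ hv

lemma thetaH2_le_Korth : thetaH2 θ ≤ (Kmod θ)ᗮ := by
  intro v hv
  rw [Submodule.mem_orthogonal]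
  intro u hu
  rw [inner_eq_zero_symm]
  exact hu.2 v hv

lemma coeffLT_le_Korth : coeffLT 0 ≤ (Kmod θ)ᗮ := by
  intro v hv
  rw [Submodule.mem_orthogonal]
  intro u hu
  exact inner_GE_LT hu.1 hv

lemma inner_theta2_mulLM (hθ : IsInner θ) (v : L2) :
    ⟪theta2 hθ, mulLM θ v⟫_ℂ = cf v 0 := by
  rw [inner_L2, cf_eq_fourierCoeff]
  unfold fourierCoeff
  refine integral_congr_ae ?_
  filter_upwards [MemLp.coeFn_toLp (hθ.memLinf.mono_exponent (le_top : (2:ℝ≥0∞) ≤ ⊤)),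
    mulLM_coeFn hθ.memLinf v, hθ.unimodular] with x h1 h2 h3
  have h4 : conj (θ x) * θ x = 1 := by
    rw [mul_comm, Complex.mul_conj]
    norm_cast
    rw [Complex.normSq_eq_norm_sq, h3, one_pow]
  rw [show ((theta2 hθ : L2) : Tc → ℂ) x = θ x from h1, h2, neg_zero, fourier_zero, one_smul,
    ← mul_assoc, h4, one_mul]

lemma Korth_decomp (hθ : IsInner θ) {f : L2} (hf : f ∈ (Kmod θ)ᗮ) :
    ∃ k ∈ H2, f - mulLM θ k ∈ coeffLT 0 := by
  haveI : CompleteSpace (thetaH2 θ) := (isClosed_thetaH2 hθ).completeSpace_coe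
  obtain ⟨k, hk, hPk⟩ := Submodule.mem_map.mp ((thetaH2 θ).orthogonalProjectionOnto f).2
  refine ⟨k, hk, ?_⟩
  have hfP : f - mulLM θ k ∈ (thetaH2 θ)ᗮ := by
    rw [show mulLM θ k = ↑((thetaH2 θ).orthogonalProjectionOnto f) from hPk]
    exact (thetaH2 θ).sub_starProjection_mem_orthogonal f
  have hfK : f - mulLM θ k ∈ (Kmod θ)ᗮ :=
    Submodule.sub_mem _ hf (thetaH2_le_Korth (hPk ▸ ((thetaH2 θ).orthogonalProjectionOnto f).2))
  rw [mem_coeffLT]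
  intro m hm
  rw [cf_eq_inner]
  set e : L2 := (fourierLp 2 m : L2) with he
  have heH : e ∈ coeffGE 0 := fourierLp_mem_coeffGE hm
  set Pe : L2 := ↑((thetaH2 θ).orthogonalProjectionOnto e) with hPe
  have hPem : Pe ∈ thetaH2 θ := ((thetaH2 θ).orthogonalProjectionOnto e).2
  have hKe : e - Pe ∈ Kmod θ := by
    constructor
    · exact Submodule.sub_mem _ heH (thetaH2_le_H2 hθ hPem)
    · exact (thetaH2 θ).sub_starProjection_mem_orthogonal e
  have h1 : ⟪Pe, f - mulLM θ k⟫_ℂ = 0 := by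
    rw [Submodule.mem_orthogonal] at hfP
    exact hfP _ hPem
  have h2 : ⟪e - Pe, f - mulLM θ k⟫_ℂ = 0 := by
    rw [Submodule.mem_orthogonal] at hfK
    exact hfK _ hKe
  have h3 : (e : L2) = Pe + (e - Pe) := by abel
  rw [h3, inner_add_left, h1, h2, add_zero]

lemma Kmod_orth_orth (hθ : IsInner θ) : ((Kmod θ)ᗮ)ᗮ = Kmod θ := by
  haveI : CompleteSpace (Kmod θ) := (isClosed_Kmod θ).completeSpace_coe
  exact Submodule.orthogonal_orthogonal _

lemma mem_kerD {g : Tc → ℂ} (hθ : IsInner θ) {f : L2} :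
    f ∈ kerD θ g ↔ f ∈ (Kmod θ)ᗮ ∧ mulLM g f ∈ Kmod θ := by
  rw [kerD, Submodule.mem_inf, Submodule.mem_comap, Kmod_orth_orth hθ]

lemma mem_sup_iff (hθ : IsInner θ) {f : L2} (hf : f ∈ (Kmod θ)ᗮ) :
    f ∈ coeffLT 0 ⊔ (coeffGE 1).map (mulLM θ) ↔ ⟪theta2 hθ, f⟫_ℂ = 0 := by
  constructor
  · intro hmem
    obtain ⟨u, hu, w, hw, rfl⟩ := Submodule.mem_sup.mp hmem
    obtain ⟨v, hv, rfl⟩ := Submodule.mem_map.mp hw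
    rw [inner_add_right, inner_GE_LT (theta2_mem_H2 hθ) hu, inner_theta2_mulLM hθ, zero_add]
    exact mem_coeffGE.mp hv 0 (by omega)
  · intro hz
    obtain ⟨k, hk, hfk⟩ := Korth_decomp hθ hf
    have h1 : ⟪theta2 hθ, f⟫_ℂ = cf k 0 := by
      have h2 : f = (f - mulLM θ k) + mulLM θ k := by abel
      rw [h2, inner_add_right, inner_GE_LT (theta2_mem_H2 hθ) hfk, inner_theta2_mulLM hθ,
        zero_add]
    refine Submodule.mem_sup.mpr ⟨f - mulLM θ k, hfk, mulLM θ k, ?_, by abel⟩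
    refine Submodule.mem_map_of_mem ?_
    rw [mem_coeffGE]
    intro n hn
    rcases lt_or_ge n 0 with hn0 | hn0
    · exact mem_coeffGE.mp hk n hn0
    · have : n = 0 := by omega
      rw [this, ← h1, hz]

lemma coeffGE_mono {a b : ℤ} (h : a ≤ b) : coeffGE b ≤ coeffGE a := by
  intro v hv
  rw [mem_coeffGE] at hv ⊢
  intro n hn
  exact hv n (by omega)

lemma mulLM_zbar_coeffGE {a : ℤ} {v : L2} (hv : v ∈ coeffGE a) :
    mulLM zbar v ∈ coeffGE (a - 1) := by
  rw [mem_coeffGE] at hv ⊢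
  intro n hn
  rw [cf_mulLM_zbar]
  exact hv _ (by omega)

lemma mulLM_zf_coeffGE {a : ℤ} {v : L2} (hv : v ∈ coeffGE a) :
    mulLM zf v ∈ coeffGE (a + 1) := by
  rw [mem_coeffGE] at hv ⊢
  intro n hn
  rw [cf_mulLM_zf]
  exact hv _ (by omega)

lemma zbar_mem_kerD {g : Tc → ℂ} (hθ : IsInner θ) (hg : MemLp g ⊤ μ0) {f : L2}
    (hfk : f ∈ kerD θ g) (hsup : f ∈ coeffLT 0 ⊔ (coeffGE 1).map (mulLM θ))
    (hga : mulLM g f ∈ coeffGE 1) :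
    mulLM zbar f ∈ kerD θ g := by
  rw [mem_kerD hθ] at hfk ⊢
  constructor
  · obtain ⟨u, hu, w, hw, rfl⟩ := Submodule.mem_sup.mp hsup
    obtain ⟨v, hv, rfl⟩ := Submodule.mem_map.mp hw
    rw [map_add]
    apply Submodule.add_mem
    · apply coeffLT_le_Korth
      rw [mem_coeffLT] at hu ⊢
      intro n hn
      rw [cf_mulLM_zbar]
      exact hu _ (by omega)
    · rw [mulLM_comm memLp_zbar hθ.memLinf]
      apply thetaH2_le_Korth
      refine Submodule.mem_map_of_mem ?_
      have := mulLM_zbar_coeffGE hv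
      simpa [H2] using this
  · rw [mulLM_comm hg memLp_zbar, Kmod, Submodule.mem_inf]
    refine ⟨?_, ?_⟩
    · rw [H2, mem_coeffGE]
      intro n hn
      rw [cf_mulLM_zbar]
      exact mem_coeffGE.mp hga _ (by omega)
    · rw [Submodule.mem_orthogonal]
      rintro u hu
      obtain ⟨h, hh, rfl⟩ := Submodule.mem_map.mp hu
      rw [mulLM_adjoint memLp_zbar, conjFun_zbar, mulLM_comm memLp_zf hθ.memLinf]
      have h2 : mulLM zf h ∈ H2 := by
        have := mulLM_zf_coeffGE hh
        rw [H2]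
        exact coeffGE_mono (by omega) this
      exact (Submodule.mem_orthogonal _ _).mp hfk.2.2 _ (Submodule.mem_map_of_mem h2)

lemma mulLM_fourier_zero (f : L2) : mulLM (fun x : Tc => (fourier 0 x : ℂ)) f = f := by
  apply Lp.ext (p := (2:ℝ≥0∞))
  filter_upwards [mulLM_coeFn (memLp_fourier 0) f] with x h1
  rw [h1, fourier_zero, one_mul]

lemma mulLM_fourier_succ (m : ℤ) (f : L2) :
    mulLM (fun x : Tc => (fourier (m + 1) x : ℂ)) f
      = mulLM zf (mulLM (fun x : Tc => (fourier m x : ℂ)) f) := by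
  apply Lp.ext (p := (2:ℝ≥0∞))
  filter_upwards [mulLM_coeFn (memLp_fourier (m+1)) f, mulLM_coeFn memLp_zf
    (mulLM (fun x : Tc => (fourier m x : ℂ)) f), mulLM_coeFn (memLp_fourier m) f] with x h1 h2 h3
  rw [h1, h2, h3, zf, show m + 1 = 1 + m from by ring, fourier_add]
  ring

lemma mulLM_fourier_pred (m : ℤ) (f : L2) :
    mulLM (fun x : Tc => (fourier (m - 1) x : ℂ)) f
      = mulLM zbar (mulLM (fun x : Tc => (fourier m x : ℂ)) f) := by
  apply Lp.ext (p := (2:ℝ≥0∞))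
  filter_upwards [mulLM_coeFn (memLp_fourier (m-1)) f, mulLM_coeFn memLp_zbar
    (mulLM (fun x : Tc => (fourier m x : ℂ)) f), mulLM_coeFn (memLp_fourier m) f] with x h1 h2 h3
  rw [h1, h2, h3, zbar, show m - 1 = -1 + m from by ring, fourier_add]
  ring

lemma zero_of_all_cf {h : L2} (hc : ∀ n : ℤ, cf h n = 0) : h = 0 := by
  have h0 : fourierBasis.repr h = 0 := by
    apply lp.ext
    funext n
    exact hc n
  exact fourierBasis.repr.map_eq_zero_iff.mp h0

lemma eq_zero_of_conjtheta_mul (hθ : IsInner θ) {f : L2}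
    (h0 : mulLM (conjFun θ) f = 0) : f = 0 := by
  have h1 : ∀ᵐ x ∂μ0, θ x * conjFun θ x = 1 := by
    filter_upwards [hθ.unimodular] with x hx
    rw [conjFun, Complex.mul_conj]
    norm_cast
    rw [Complex.normSq_eq_norm_sq, hx, one_pow]
  calc f = mulLM θ (mulLM (conjFun θ) f) :=
        (mulLM_cancel hθ.memLinf (memLp_conj hθ.memLinf) h1 f).symm
    _ = 0 := by rw [h0, map_zero]

lemma cf_conjtheta_eq_inner (hθ : IsInner θ) (f : L2) (m : ℤ) :
    cf (mulLM (conjFun θ) f) m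
      = ⟪theta2 hθ, mulLM (fun x : Tc => (fourier (-m) x : ℂ)) f⟫_ℂ := by
  rw [cf_eq_fourierCoeff, fourierCoeff_congr (mulLM_coeFn (memLp_conj hθ.memLinf) f), inner_L2]
  unfold fourierCoeff
  refine integral_congr_ae ?_
  filter_upwards [MemLp.coeFn_toLp (hθ.memLinf.mono_exponent (le_top : (2:ℝ≥0∞) ≤ ⊤)),
    mulLM_coeFn (memLp_fourier (-m)) f] with x h1 h2
  rw [h2, show ((theta2 hθ : L2) : Tc → ℂ) x = θ x from h1]
  simp only [conjFun, smul_eq_mul]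
  ring

/-- If the kernel of the dual truncated Toeplitz operator equals `C`, it is trivial. -/
lemma kerD_eq_bot_of_eq_dualC {g : Tc → ℂ} (hθ : IsInner θ) (hg : MemLp g ⊤ μ0)
    (hfd : FiniteDimensional ℂ ↥(kerD θ g)) (hC : kerD θ g = dualC θ g) :
    kerD θ g = ⊥ := by
  rw [Submodule.eq_bot_iff]
  intro f hf
  have hall : ∀ h, h ∈ kerD θ g →
      h ∈ coeffLT 0 ⊔ (coeffGE 1).map (mulLM θ) ∧ mulLM g h ∈ coeffGE 1 := by
    intro h hh
    rw [hC] at hh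
    exact ⟨hh.1.2, hh.2.2.2⟩
  have hzb : ∀ h, h ∈ kerD θ g → mulLM zbar h ∈ kerD θ g := fun h hh =>
    zbar_mem_kerD hθ hg hh (hall h hh).1 (hall h hh).2
  -- the restricted backward shift is injective, hence surjective
  set T : ↥(kerD θ g) →ₗ[ℂ] ↥(kerD θ g) :=
    (mulLM zbar).restrict (p := kerD θ g) (q := kerD θ g) hzb with hT
  have hTinj : Function.Injective T := by
    intro x y hxy
    have h1 : mulLM zbar (x : L2) = mulLM zbar (y : L2) := congrArg Subtype.val hxy
    have h2 : (x : L2) = (y : L2) := by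
      have := congrArg (mulLM zf) h1
      rwa [mulLM_cancel memLp_zf memLp_zbar
          (Filter.Eventually.of_forall zf_mul_zbar) (x : L2),
        mulLM_cancel memLp_zf memLp_zbar
          (Filter.Eventually.of_forall zf_mul_zbar) (y : L2)] at this
    exact Subtype.ext h2
  have hTsurj : Function.Surjective T := LinearMap.injective_iff_surjective.mp hTinj
  have hzf : ∀ h, h ∈ kerD θ g → mulLM zf h ∈ kerD θ g := by
    intro h hh
    obtain ⟨w, hw⟩ := hTsurj ⟨h, hh⟩
    have h1 : mulLM zbar (w : L2) = h := congrArg Subtype.val hw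
    have h2 : mulLM zf h = (w : L2) := by
      rw [← h1, mulLM_cancel memLp_zf memLp_zbar
        (Filter.Eventually.of_forall zf_mul_zbar) (w : L2)]
    rw [h2]
    exact w.2
  have hfour : ∀ m : ℤ, mulLM (fun x : Tc => (fourier m x : ℂ)) f ∈ kerD θ g := by
    intro m
    induction m using Int.induction_on with
    | zero => rw [mulLM_fourier_zero]; exact hf
    | succ i ih =>
        rw [show ((i : ℤ) + 1) = (i : ℤ) + 1 from rfl, mulLM_fourier_succ]
        exact hzf _ ih
    | pred i ih =>
        rw [show (-(i : ℤ) - 1) = (-(i : ℤ)) - 1 from rfl, mulLM_fourier_pred]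
        exact hzb _ ih
  have hcf : ∀ m : ℤ, cf (mulLM (conjFun θ) f) m = 0 := by
    intro m
    rw [cf_conjtheta_eq_inner hθ]
    have hmem := hfour (-m)
    have h1 : mulLM (fun x : Tc => (fourier (-m) x : ℂ)) f ∈ (Kmod θ)ᗮ :=
      ((mem_kerD hθ).mp hmem).1
    exact (mem_sup_iff hθ h1).mp (hall _ hmem).1
  exact eq_zero_of_conjtheta_mul hθ (zero_of_all_cf hcf)

end Theta

theorem dim_kernel_dual_truncated_toeplitz_minus_C'
    (θ g : Tc → ℂ) (hθ : IsInner θ) (hg : MemLp g ⊤ μ0)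
    (hfd : FiniteDimensional ℂ ↥(kerD θ g))
    (hne : kerD θ g ≠ ⊥) :
    1 ≤ Module.finrank ℂ ↥(kerD θ g ⊓ (dualC θ g)ᗮ) ∧
      Module.finrank ℂ ↥(kerD θ g ⊓ (dualC θ g)ᗮ) ≤ 2 := by
  classical
  have hCle : dualC θ g ≤ kerD θ g := fun x hx => hx.1.1
  haveI hCfd : FiniteDimensional ℂ ↥(dualC θ g) := Submodule.finiteDimensional_of_le hCle
  haveI : CompleteSpace ↥(dualC θ g) := FiniteDimensional.complete ℂ _
  haveI : FiniteDimensional ℂ ↥(kerD θ g ⊓ (dualC θ g)ᗮ) :=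
    Submodule.finiteDimensional_of_le inf_le_left
  -- orthogonal decomposition of the kernel
  have hdecomp : dualC θ g ⊔ (kerD θ g ⊓ (dualC θ g)ᗮ) = kerD θ g := by
    apply le_antisymm (sup_le hCle inf_le_left)
    intro v hv
    obtain ⟨y, hy, z, hz, rfl⟩ := (dualC θ g).exists_add_mem_mem_orthogonal v
    refine Submodule.add_mem _ (Submodule.mem_sup_left hy) (Submodule.mem_sup_right ⟨?_, hz⟩)
    have : z = (y + z) - y := by abel
    rw [this]
    exact Submodule.sub_mem _ hv (hCle hy)
  have hsum : Module.finrank ℂ ↥(dualC θ g) + Module.finrank ℂ ↥(kerD θ g ⊓ (dualC θ g)ᗮ)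
      = Module.finrank ℂ ↥(kerD θ g) := by
    have h1 := Submodule.finrank_sup_add_finrank_inf_eq (dualC θ g) (kerD θ g ⊓ (dualC θ g)ᗮ)
    have h2 : dualC θ g ⊓ (kerD θ g ⊓ (dualC θ g)ᗮ) = ⊥ := by
      rw [Submodule.eq_bot_iff]
      rintro x ⟨hx1, -, hx2⟩
      exact ((dualC θ g).orthogonal_disjoint).le_bot ⟨hx1, hx2⟩
    rw [hdecomp, h2, finrank_bot, add_zero] at h1
    omega
  -- the two linear functionals cutting out `C` inside the kernel
  set φ1 : ↥(kerD θ g) →ₗ[ℂ] ℂ :=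
    (coeffCLM 0).toLinearMap ∘ₗ (mulLM g) ∘ₗ (kerD θ g).subtype with hφ1
  set φ2 : ↥(kerD θ g) →ₗ[ℂ] ℂ :=
    (innerSL ℂ (theta2 hθ)).toLinearMap ∘ₗ (kerD θ g).subtype with hφ2
  set Φ : ↥(kerD θ g) →ₗ[ℂ] ℂ × ℂ := LinearMap.prod φ1 φ2 with hΦ
  have hker : LinearMap.ker Φ = (dualC θ g).comap (kerD θ g).subtype := by
    ext x
    rw [LinearMap.mem_ker, Submodule.mem_comap]
    have hx := x.2
    rw [mem_kerD hθ] at hx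
    constructor
    · intro h0
      have h1 : φ1 x = 0 := congrArg Prod.fst h0
      have h2 : φ2 x = 0 := congrArg Prod.snd h0
      have hge1 : mulLM g (x : L2) ∈ coeffGE 1 := by
        rw [mem_coeffGE]
        intro n hn
        rcases lt_or_ge n 0 with hn0 | hn0
        · exact mem_coeffGE.mp hx.2.1 n hn0
        · have hn1 : n = 0 := by omega
          subst hn1
          exact h1
      refine ⟨⟨x.2, ?_⟩, x.2, hx.2, hge1⟩
      exact (mem_sup_iff hθ hx.1).mpr h2
    · intro hC
      have h1 : φ1 x = 0 := by
        have := hC.2.2.2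
        exact mem_coeffGE.mp this 0 (by omega)
      have h2 : φ2 x = 0 := (mem_sup_iff hθ hx.1).mp hC.1.2
      exact Prod.ext h1 h2
  have hkerrank : Module.finrank ℂ ↥(LinearMap.ker Φ) = Module.finrank ℂ ↥(dualC θ g) := by
    rw [hker]
    exact (Submodule.comapSubtypeEquivOfLe hCle).finrank_eq
  have hrn := LinearMap.finrank_range_add_finrank_ker Φ
  have hrange : Module.finrank ℂ ↥(LinearMap.range Φ) ≤ 2 := by
    have := Submodule.finrank_le (LinearMap.range Φ)
    simpa [Module.finrank_prod, Module.finrank_self] using this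
  constructor
  · by_contra hlt
    have h0 : Module.finrank ℂ ↥(kerD θ g ⊓ (dualC θ g)ᗮ) = 0 := by omega
    have hbot : kerD θ g ⊓ (dualC θ g)ᗮ = ⊥ := Submodule.finrank_eq_zero.mp h0
    rw [hbot, sup_bot_eq] at hdecomp
    exact hne (kerD_eq_bot_of_eq_dualC hθ hg hfd hdecomp.symm)
  · omega

end Paper

namespace Paper

/-- **Corollary 7.2.**  If `ker D_g^θ` is finite-dimensional and nonzero, then
`1 ≤ dim (ker D_g^θ ⊖ C) ≤ 2`. -/
theorem dim_kernel_dual_truncated_toeplitz_minus_C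
    (θ g : Tc → ℂ) (hθ : IsInner θ) (hg : MemLp g ⊤ μ0)
    (hfd : FiniteDimensional ℂ ↥(kerD θ g))
    (hne : kerD θ g ≠ ⊥) :
    1 ≤ Module.finrank ℂ ↥(kerD θ g ⊓ (dualC θ g)ᗮ) ∧
      Module.finrank ℂ ↥(kerD θ g ⊓ (dualC θ g)ᗮ) ≤ 2 := by
  exact dim_kernel_dual_truncated_toeplitz_minus_C' θ g hθ hg hfd hne

end Paper
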